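/- arXiv:1505.02532 — 3 statements merged into one kernel-verified Lean document; each statement's English description precedes it below -/
import Mathlib

section
/- Let k be a field, R = k[X_0,...,X_{m-1}], and F, G finite subsets of R with the same k-linear span. If i ≥ deg(F) (the maximum degree of an element of F), then V_{F,i} = V_{G,i}. -/
/-- `VSpace F i` is the smallest `k`-subspace of `k[X_0,...,X_{m-1}]` containing all
`f ∈ F` of total degree at most `i`, and closed under multiplication by arbitrary
polynomials as long as the product has total degree at most `i`. -/
noncomputable def VSpace {k : Type*} [Field k] {m : ℕ} (F : Set (MvPolynomial (Fin m) k)) (i : ℕ) :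
    Submodule k (MvPolynomial (Fin m) k) :=
  sInf {W : Submodule k (MvPolynomial (Fin m) k) |
    (∀ f ∈ F, f.totalDegree ≤ i → f ∈ W) ∧
    ∀ g ∈ W, ∀ h : MvPolynomial (Fin m) k, (h * g).totalDegree ≤ i → h * g ∈ W}

/-- The last fall degree `d_F`: the minimal `d` such that every `f` in the ideal
generated by `F` lies in `VSpace F (max d (deg f))` (`sInf ∅ = 0` by convention). -/
noncomputable def lastFallDegree {k : Type*} [Field k] {m : ℕ}
    (F : Set (MvPolynomial (Fin m) k)) : ℕ :=
  sInf {d : ℕ | ∀ f ∈ Ideal.span F, f ∈ VSpace F (max d f.totalDegree)}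

lemma mem_VSpace_of_mem {k : Type*} [Field k] {m : ℕ} {F : Set (MvPolynomial (Fin m) k)}
    {i : ℕ} {f : MvPolynomial (Fin m) k} (hf : f ∈ F) (hd : f.totalDegree ≤ i) :
    f ∈ VSpace F i := by
  rw [VSpace, Submodule.mem_sInf]
  exact fun W hW => hW.1 f hf hd

lemma mul_mem_VSpace {k : Type*} [Field k] {m : ℕ} {F : Set (MvPolynomial (Fin m) k)}
    {i : ℕ} {g : MvPolynomial (Fin m) k} (hg : g ∈ VSpace F i)
    (h : MvPolynomial (Fin m) k) (hd : (h * g).totalDegree ≤ i) : h * g ∈ VSpace F i := by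
  rw [VSpace, Submodule.mem_sInf] at hg ⊢
  exact fun W hW => hW.2 g (hg W hW) h hd

lemma VSpace_le_of_span_le {k : Type*} [Field k] {m : ℕ}
    (A B : Set (MvPolynomial (Fin m) k)) (i : ℕ)
    (hB : ∀ b ∈ B, b.totalDegree ≤ i)
    (hAB : Submodule.span k A ≤ Submodule.span k B) :
    VSpace A i ≤ VSpace B i := by
  refine sInf_le ⟨?_, ?_⟩
  · intro f hf _
    have hfB : f ∈ Submodule.span k B := hAB (Submodule.subset_span hf)
    exact Submodule.span_le.mpr (fun b hb => mem_VSpace_of_mem hb (hB b hb)) hfB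
  · intro g hg h hd
    exact mul_mem_VSpace hg h hd

/-- If `F` and `G` have the same `k`-linear span and `i ≥ deg F`,
then `VSpace F i = VSpace G i`. -/
theorem VSpace_eq_of_span_eq {k : Type*} [Field k] {m : ℕ}
    (F G : Set (MvPolynomial (Fin m) k)) (hF : F.Finite) (hG : G.Finite)
    (hspan : Submodule.span k F = Submodule.span k G) (i : ℕ)
    (hi : ∀ f ∈ F, f.totalDegree ≤ i) :
    VSpace F i = VSpace G i := by
  have hG' : ∀ g ∈ G, g.totalDegree ≤ i := by
    intro g hg
    have hmem : g ∈ Submodule.span k F := hspan ▸ Submodule.subset_span hg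
    have hle : Submodule.span k F ≤ MvPolynomial.restrictTotalDegree (Fin m) k i :=
      Submodule.span_le.mpr
        (fun f hf => (MvPolynomial.mem_restrictTotalDegree _ _ _).mpr (hi f hf))
    exact (MvPolynomial.mem_restrictTotalDegree _ _ _).mp (hle hmem)
  exact le_antisymm (VSpace_le_of_span_le F G i hG' hspan.le)
    (VSpace_le_of_span_le G F i hi hspan.ge)
end

section
/- Let k be a field and F a finite subset of R generating ideal I, with last fall degree d_F. Then for every i ≥ d_F, V_{F,i} = I ∩ R_{≤i}, and d_F equals the largest c ≥ 0 such that V_{F,c} ∩ R_{≤ c-1} ≠ V_{F,c-1} (with V_{F,-1} = ∅ by convention, and the largest such c taken to be 0 if none exists). -/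
open MvPolynomial

section Helpers

variable {k : Type*} [Field k] {m : ℕ} {F : Set (MvPolynomial (Fin m) k)}

private lemma vspace_mem_sInf {i : ℕ} {x : MvPolynomial (Fin m) k} :
    x ∈ VSpace F i ↔ ∀ W : Submodule k (MvPolynomial (Fin m) k),
      ((∀ f ∈ F, f.totalDegree ≤ i → f ∈ W) ∧
       ∀ g ∈ W, ∀ h : MvPolynomial (Fin m) k, (h * g).totalDegree ≤ i → h * g ∈ W) →
      x ∈ W := by
  simp only [VSpace, Submodule.mem_sInf, Set.mem_setOf_eq]

private lemma vspace_mem_of_mem {f : MvPolynomial (Fin m) k} (hf : f ∈ F) {i : ℕ}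
    (h : f.totalDegree ≤ i) : f ∈ VSpace F i := by
  rw [vspace_mem_sInf]; exact fun W hW => hW.1 f hf h

private lemma vspace_mul_mem {g h : MvPolynomial (Fin m) k} {i : ℕ} (hg : g ∈ VSpace F i)
    (hd : (h * g).totalDegree ≤ i) : h * g ∈ VSpace F i := by
  rw [vspace_mem_sInf] at hg ⊢
  exact fun W hW => hW.2 g (hg W hW) h hd

private lemma vspace_mono {i j : ℕ} (hij : i ≤ j) : VSpace F i ≤ VSpace F j := by
  apply sInf_le
  exact ⟨fun f hf hd => vspace_mem_of_mem hf (hd.trans hij),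
         fun g hg h hd => vspace_mul_mem hg (hd.trans hij)⟩

private lemma vspace_subset {i : ℕ} {f : MvPolynomial (Fin m) k} (hf : f ∈ VSpace F i) :
    f ∈ Ideal.span F ∧ f.totalDegree ≤ i := by
  have h : f ∈ Submodule.restrictScalars k (Ideal.span F) ⊓
      restrictTotalDegree (Fin m) k i := by
    have hle : VSpace F i ≤ Submodule.restrictScalars k (Ideal.span F) ⊓
        restrictTotalDegree (Fin m) k i := by
      refine sInf_le ⟨?_, ?_⟩
      · intro g hg hd
        exact ⟨Ideal.subset_span hg, (mem_restrictTotalDegree _ _ _).2 hd⟩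
      · rintro g ⟨hg1, _⟩ h hd
        exact ⟨Ideal.mul_mem_left _ h hg1, (mem_restrictTotalDegree _ _ _).2 hd⟩
    exact hle hf
  exact ⟨h.1, (mem_restrictTotalDegree _ _ _).1 h.2⟩

private lemma exists_vspace {f : MvPolynomial (Fin m) k} (hf : f ∈ Ideal.span F) :
    ∃ i, f ∈ VSpace F i := by
  refine Submodule.span_induction ?_ ?_ ?_ ?_ hf
  · exact fun x hx => ⟨x.totalDegree, vspace_mem_of_mem hx le_rfl⟩
  · exact ⟨0, zero_mem _⟩
  · rintro x y _ _ ⟨i, hi⟩ ⟨j, hj⟩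
    exact ⟨max i j, add_mem (vspace_mono (le_max_left i j) hi)
      (vspace_mono (le_max_right i j) hj)⟩
  · rintro r x _ ⟨i, hi⟩
    refine ⟨max i ((r * x).totalDegree), ?_⟩
    rw [smul_eq_mul]
    exact vspace_mul_mem (vspace_mono (le_max_left _ _) hi) (le_max_right _ _)

private lemma exists_uniform (F : Set (MvPolynomial (Fin m) k)) (j : ℕ) :
    ∃ N, ∀ f ∈ Ideal.span F, f.totalDegree ≤ j → f ∈ VSpace F N := by
  classical
  set T := restrictTotalDegree (Fin m) k j with hT
  set W := Submodule.restrictScalars k (Ideal.span F) ⊓ T with hW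
  have hWT : W ≤ T := inf_le_right
  have hfg : W.FG := by
    have h1 : (Submodule.comap T.subtype W).FG := IsNoetherian.noetherian _
    have h2 := h1.map T.subtype
    rwa [Submodule.map_comap_subtype, inf_eq_right.2 hWT] at h2
  obtain ⟨S, hS⟩ := hfg
  have hmem : ∀ x ∈ S, x ∈ Ideal.span F := by
    intro x hx
    have : x ∈ W := hS ▸ Submodule.subset_span hx
    exact this.1
  set ι : MvPolynomial (Fin m) k → ℕ := fun x =>
    if hx : x ∈ Ideal.span F then Classical.choose (exists_vspace hx) else 0 with hι
  refine ⟨S.sup ι, ?_⟩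
  intro f hf hdf
  have hfW : f ∈ W := ⟨hf, (mem_restrictTotalDegree _ _ _).2 hdf⟩
  rw [← hS] at hfW
  refine Submodule.span_le.2 ?_ hfW
  intro x hx
  have hxI := hmem x hx
  have : x ∈ VSpace F (ι x) := by
    rw [hι]; simp only [hxI, dif_pos]
    exact Classical.choose_spec (exists_vspace hxI)
  exact vspace_mono (Finset.le_sup hx) this

private lemma hc_mul {H : MvPolynomial (Fin m) k} {a : ℕ} (hH : H.IsHomogeneous a)
    (p : MvPolynomial (Fin m) k) (b : ℕ) :
    homogeneousComponent (a + b) (H * p) = H * homogeneousComponent b p := by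
  have h1 : H * p = ∑ e ∈ Finset.range (p.totalDegree + 1), H * homogeneousComponent e p := by
    rw [← Finset.mul_sum, sum_homogeneousComponent]
  rw [h1, map_sum]
  have h2 : ∀ e, homogeneousComponent (a + b) (H * homogeneousComponent e p)
      = if a + b = a + e then H * homogeneousComponent e p else 0 := fun e =>
    homogeneousComponent_of_mem ((mem_homogeneousSubmodule _ _).2
      (hH.mul (homogeneousComponent_isHomogeneous e p)))
  simp_rw [h2, add_right_inj]
  rw [Finset.sum_ite_eq (Finset.range (p.totalDegree + 1)) b
    (fun e => H * homogeneousComponent e p)]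
  split_ifs with hb
  · rfl
  · rw [homogeneousComponent_eq_zero, mul_zero]
    simpa using hb

private lemma totalDegree_le_pred {p : MvPolynomial (Fin m) k} {D : ℕ}
    (h1 : p.totalDegree ≤ D) (h2 : homogeneousComponent D p = 0) :
    p.totalDegree ≤ D - 1 := by
  rw [totalDegree]
  apply Finset.sup_le
  intro s hs
  have hle : (s.sum fun _ e => e) ≤ D := le_trans (le_totalDegree hs) h1
  rcases lt_or_eq_of_le hle with h | h
  · omega
  · exfalso
    have hc := coeff_homogeneousComponent D p s
    rw [h2] at hc
    have hdeg : s.degree = D := by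
      rw [Finsupp.degree_apply]
      simpa [Finsupp.sum] using h
    rw [if_pos hdeg] at hc
    exact (mem_support_iff.1 hs) (by simpa using hc.symm)

private lemma exists_lastFall (F : Set (MvPolynomial (Fin m) k)) :
    ∃ d, ∀ f ∈ Ideal.span F, f ∈ VSpace F (max d f.totalDegree) := by
  classical
  set S : Set (MvPolynomial (Fin m) k) :=
    (fun f => homogeneousComponent f.totalDegree f) '' ((Ideal.span F : Ideal _) : Set _)
    with hSdef
  -- a finite subset of S generating the same ideal (up to ≤)
  have hfin : ∃ T : Finset (MvPolynomial (Fin m) k), ↑T ⊆ S ∧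
      Ideal.span S ≤ Ideal.span (T : Set (MvPolynomial (Fin m) k)) := by
    obtain ⟨G, hG⟩ := (IsNoetherian.noetherian (Ideal.span S) : (Ideal.span S).FG)
    have hmem : ∀ g ∈ G, ∃ T : Finset (MvPolynomial (Fin m) k),
        ↑T ⊆ S ∧ g ∈ Submodule.span (MvPolynomial (Fin m) k) (T : Set _) := by
      intro g hg
      have hgS : g ∈ Ideal.span S := by
        rw [← hG]; exact Submodule.subset_span hg
      exact Submodule.mem_span_finite_of_mem_span hgS
    choose Tg hTg1 hTg2 using hmem
    refine ⟨G.attach.biUnion (fun g => Tg g.1 g.2), ?_, ?_⟩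
    · intro x hx
      simp only [Finset.coe_biUnion, Set.mem_iUnion, Finset.mem_coe] at hx
      obtain ⟨g, _, hg2⟩ := hx
      exact hTg1 g.1 g.2 hg2
    · rw [← hG]
      apply Submodule.span_le.2
      intro g hg
      have : g ∈ Submodule.span (MvPolynomial (Fin m) k)
          ((Tg g hg : Set (MvPolynomial (Fin m) k))) := hTg2 g hg
      refine Submodule.span_mono ?_ this
      intro x hx
      simp only [Finset.coe_biUnion, Set.mem_iUnion, Finset.mem_coe]
      exact ⟨⟨g, hg⟩, Finset.mem_attach _ _, hx⟩
  obtain ⟨T, hTS, hTspan⟩ := hfin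
  -- choose preimages
  have hmemT : ∀ t ∈ T, ∃ p : MvPolynomial (Fin m) k,
      p ∈ Ideal.span F ∧ homogeneousComponent p.totalDegree p = t := by
    intro t ht
    obtain ⟨p, hp1, hp2⟩ := hTS ht
    exact ⟨p, hp1, hp2⟩
  choose pt hptI hptL using hmemT
  have hmemE : ∀ t (ht : t ∈ T), ∃ i, pt t ht ∈ VSpace F i := fun t ht =>
    exists_vspace (hptI t ht)
  choose et het using hmemE
  set A : ℕ := T.attach.sup (fun t => max (pt t.1 t.2).totalDegree (et t.1 t.2)) with hA
  obtain ⟨N, hN⟩ := exists_uniform F A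
  refine ⟨max A N, ?_⟩
  set d := max A N with hd
  have key : ∀ n : ℕ, ∀ f ∈ Ideal.span F, f.totalDegree ≤ n → f ∈ VSpace F (max d n) := by
    intro n
    induction n using Nat.strong_induction_on with
    | _ n ih =>
      intro f hfI hfn
      by_cases hAf : f.totalDegree ≤ A
      · exact vspace_mono (le_trans (le_max_right A N) (le_max_left d n)) (hN f hfI hAf)
      · set D := f.totalDegree with hD
        have hAD : A < D := not_le.1 hAf
        have hDn : D ≤ n := hfn
        -- the leading form of f lies in the span of T
        have hLf : homogeneousComponent D f ∈
            Submodule.span (MvPolynomial (Fin m) k) (T : Set (MvPolynomial (Fin m) k)) := by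
          apply hTspan
          exact Ideal.subset_span ⟨f, hfI, rfl⟩
        rw [Submodule.mem_span_finset] at hLf
        obtain ⟨c, -, hc⟩ := hLf
        -- degrees of the chosen generators
        have hsup : ∀ t (ht : t ∈ T), max (pt t ht).totalDegree (et t ht) ≤ A := by
          intro t ht
          exact Finset.le_sup (f := fun t : {x // x ∈ T} =>
            max (pt t.1 t.2).totalDegree (et t.1 t.2)) (Finset.mem_attach T ⟨t, ht⟩)
        have hdt : ∀ t (ht : t ∈ T), (pt t ht).totalDegree ≤ A := fun t ht =>
          le_trans (le_max_left _ _) (hsup t ht)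
        have het' : ∀ t (ht : t ∈ T), et t ht ≤ A := fun t ht =>
          le_trans (le_max_right _ _) (hsup t ht)
        -- rewrite the sum over the attached finset
        have hcc : ∑ t ∈ T.attach, c t.1 * t.1 = homogeneousComponent D f := by
          rw [← hc, ← Finset.sum_attach T (fun t => c t • t)]
          simp [smul_eq_mul]
        set H : {x // x ∈ T} → MvPolynomial (Fin m) k := fun t =>
          homogeneousComponent (D - (pt t.1 t.2).totalDegree) (c t.1) with hH
        have hHhom : ∀ t : {x // x ∈ T}, (H t).IsHomogeneous (D - (pt t.1 t.2).totalDegree) :=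
          fun t => homogeneousComponent_isHomogeneous _ _
        have hDsplit : ∀ t : {x // x ∈ T},
            (D - (pt t.1 t.2).totalDegree) + (pt t.1 t.2).totalDegree = D := fun t =>
          Nat.sub_add_cancel (le_of_lt (lt_of_le_of_lt (hdt t.1 t.2) hAD))
        -- key identity: hc_D (c t * t) = H t * t
        have hterm : ∀ t : {x // x ∈ T},
            homogeneousComponent D (c t.1 * t.1) = H t * t.1 := by
          intro t
          have hthom : (t.1).IsHomogeneous (pt t.1 t.2).totalDegree := by
            have h0 := homogeneousComponent_isHomogeneous
              ((pt t.1 t.2).totalDegree) (pt t.1 t.2)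
            rwa [hptL t.1 t.2] at h0
          have := hc_mul hthom (c t.1) (D - (pt t.1 t.2).totalDegree)
          rw [mul_comm (c t.1) t.1]
          calc homogeneousComponent D (t.1 * c t.1)
              = homogeneousComponent ((pt t.1 t.2).totalDegree +
                  (D - (pt t.1 t.2).totalDegree)) (t.1 * c t.1) := by
                rw [Nat.add_sub_cancel' (le_of_lt (lt_of_le_of_lt (hdt t.1 t.2) hAD))]
            _ = t.1 * H t := this
            _ = H t * t.1 := mul_comm _ _
        set q : MvPolynomial (Fin m) k := ∑ t ∈ T.attach, H t * pt t.1 t.2 with hq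
        -- q is in the ideal and in the V-space, with degree ≤ D
        have hdegHt : ∀ t : {x // x ∈ T}, (H t * pt t.1 t.2).totalDegree ≤ D := by
          intro t
          refine le_trans (totalDegree_mul _ _) ?_
          refine le_trans (add_le_add ((hHhom t).totalDegree_le) le_rfl) ?_
          rw [hDsplit t]
        have hqV : q ∈ VSpace F (max d n) := by
          refine Submodule.sum_mem _ ?_
          intro t _
          refine vspace_mul_mem (vspace_mono ?_ (het t.1 t.2)) ?_
          · exact le_trans (le_trans (het' t.1 t.2) (le_trans (le_max_left A N)
              (le_max_left d n))) le_rfl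
          · exact le_trans (hdegHt t) (le_trans hDn (le_max_right d n))
        have hqI : q ∈ Ideal.span F := by
          refine Submodule.sum_mem _ ?_
          intro t _
          exact Ideal.mul_mem_left _ _ (hptI t.1 t.2)
        have hdegq : q.totalDegree ≤ D :=
          le_trans (totalDegree_finset_sum _ _) (Finset.sup_le fun t _ => hdegHt t)
        -- hc_D q = hc_D f
        have hhcq : homogeneousComponent D q = homogeneousComponent D f := by
          have hterms : ∀ t : {x // x ∈ T},
              homogeneousComponent D (H t * pt t.1 t.2) = H t * t.1 := by
            intro t
            have h := hc_mul (hHhom t) (pt t.1 t.2) ((pt t.1 t.2).totalDegree)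
            rw [hDsplit t] at h
            rw [h, hptL t.1 t.2]
          have e1 : homogeneousComponent D q = ∑ t ∈ T.attach, H t * t.1 := by
            rw [hq, map_sum]
            exact Finset.sum_congr rfl (fun t _ => hterms t)
          have e2 : (∑ t ∈ T.attach, H t * t.1)
              = ∑ t ∈ T.attach, homogeneousComponent D (c t.1 * t.1) :=
            Finset.sum_congr rfl (fun t _ => (hterm t).symm)
          have e3 : (∑ t ∈ T.attach, homogeneousComponent D (c t.1 * t.1))
              = homogeneousComponent D (∑ t ∈ T.attach, c t.1 * t.1) :=
            (map_sum _ _ _).symm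
          rw [e1, e2, e3, hcc,
            homogeneousComponent_of_mem (homogeneousComponent_mem D f), if_pos rfl]
        -- the remainder
        set g : MvPolynomial (Fin m) k := f - q with hg
        have hgI : g ∈ Ideal.span F := Submodule.sub_mem _ hfI hqI
        have hgdeg : g.totalDegree ≤ D := by
          rw [hg, sub_eq_add_neg]
          refine le_trans (totalDegree_add _ _) ?_
          rw [totalDegree_neg]
          exact max_le le_rfl hdegq
        have hgD : homogeneousComponent D g = 0 := by
          rw [hg, map_sub, hhcq, sub_self]
        have hglt : g.totalDegree ≤ D - 1 := totalDegree_le_pred hgdeg hgD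
        have hgV : g ∈ VSpace F (max d (D - 1)) := by
          refine ih (D - 1) ?_ g hgI hglt
          omega
        have hgV' : g ∈ VSpace F (max d n) := by
          refine vspace_mono ?_ hgV
          have : D - 1 ≤ n := by omega
          exact max_le (le_max_left _ _) (le_trans this (le_max_right _ _))
        have : f = g + q := by rw [hg]; ring
        rw [this]
        exact Submodule.add_mem _ hgV' hqV
  intro f hf
  exact key f.totalDegree f hf le_rfl

end Helpers

/-- For `i ≥ d_F` one has `VSpace F i = I ∩ R_{≤ i}`, and `d_F` is the
largest `c` such that `VSpace F c ∩ R_{≤ c-1} ≠ VSpace F (c-1)` (with the convention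
`V_{F,-1} = ∅`, so only `c ≥ 1` can qualify, and `d_F = 0` if no such `c` exists). -/
theorem lastFallDegree_spec {k : Type*} [Field k] {m : ℕ}
    (F : Set (MvPolynomial (Fin m) k)) (hF : F.Finite) :
    (∀ i : ℕ, lastFallDegree F ≤ i →
      (VSpace F i : Set (MvPolynomial (Fin m) k)) =
        ((Ideal.span F : Ideal (MvPolynomial (Fin m) k)) : Set (MvPolynomial (Fin m) k)) ∩ {f : MvPolynomial (Fin m) k | f.totalDegree ≤ i}) ∧
    lastFallDegree F = sSup {c : ℕ | 0 < c ∧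
      (VSpace F c : Set (MvPolynomial (Fin m) k)) ∩ {f : MvPolynomial (Fin m) k | f.totalDegree ≤ c - 1} ≠
        (VSpace F (c - 1) : Set (MvPolynomial (Fin m) k))} := by
  classical
  obtain ⟨d0, hd0⟩ := exists_lastFall F
  have hne : {d : ℕ | ∀ f ∈ Ideal.span F, f ∈ VSpace F (max d f.totalDegree)}.Nonempty :=
    ⟨d0, hd0⟩
  have hdF : ∀ f ∈ Ideal.span F, f ∈ VSpace F (max (lastFallDegree F) f.totalDegree) :=
    Nat.sInf_mem hne
  -- part 1
  have part1 : ∀ i : ℕ, lastFallDegree F ≤ i →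
      (VSpace F i : Set (MvPolynomial (Fin m) k)) =
        ((Ideal.span F : Ideal (MvPolynomial (Fin m) k)) : Set (MvPolynomial (Fin m) k)) ∩
          {f : MvPolynomial (Fin m) k | f.totalDegree ≤ i} := by
    intro i hi
    ext f
    constructor
    · intro hf
      obtain ⟨h1, h2⟩ := vspace_subset hf
      exact ⟨h1, h2⟩
    · rintro ⟨h1, h2⟩
      have := hdF f h1
      exact vspace_mono (max_le hi h2) this
  refine ⟨part1, ?_⟩
  set S : Set ℕ := {c : ℕ | 0 < c ∧
      (VSpace F c : Set (MvPolynomial (Fin m) k)) ∩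
        {f : MvPolynomial (Fin m) k | f.totalDegree ≤ c - 1} ≠
        (VSpace F (c - 1) : Set (MvPolynomial (Fin m) k))} with hSdef
  -- S is bounded above by lastFallDegree F
  have hbdd : ∀ c ∈ S, c ≤ lastFallDegree F := by
    intro c hc
    by_contra hlt
    push_neg at hlt
    apply hc.2
    have hc1 : lastFallDegree F ≤ c - 1 := by omega
    ext f
    constructor
    · rintro ⟨hf1, hf2⟩
      have hfI := (vspace_subset hf1).1
      have : f ∈ ((Ideal.span F : Ideal (MvPolynomial (Fin m) k)) : Set _) ∩
          {f : MvPolynomial (Fin m) k | f.totalDegree ≤ c - 1} := ⟨hfI, hf2⟩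
      rw [← part1 (c - 1) hc1] at this
      exact this
    · intro hf
      refine ⟨vspace_mono (Nat.sub_le c 1) hf, (vspace_subset hf).2⟩
  have hBdd : BddAbove S := ⟨lastFallDegree F, hbdd⟩
  have hSup_le : sSup S ≤ lastFallDegree F := by
    rcases S.eq_empty_or_nonempty with h | h
    · rw [h]; simp
    · exact csSup_le h hbdd
  refine le_antisymm ?_ hSup_le
  -- lastFallDegree F ≤ sSup S : show sSup S works as a fall degree
  apply Nat.sInf_le
  intro f hfI
  have hstart : f ∈ VSpace F (max (lastFallDegree F) f.totalDegree) := hdF f hfI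
  set j := max (sSup S) f.totalDegree with hj
  have hjle : j ≤ max (lastFallDegree F) f.totalDegree :=
    max_le (le_trans hSup_le (le_max_left _ _)) (le_max_right _ _)
  -- descend from level i to level j
  have descend : ∀ t : ℕ, f ∈ VSpace F (j + t) → f ∈ VSpace F j := by
    intro t
    induction t with
    | zero => exact fun h => h
    | succ t iht =>
      intro h
      apply iht
      have hcpos : 0 < j + t + 1 := Nat.succ_pos _
      have hnotS : (j + t + 1) ∉ S := by
        intro hmem
        have := le_csSup hBdd hmem
        omega
      have heq : (VSpace F (j + t + 1) : Set (MvPolynomial (Fin m) k)) ∩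
          {f : MvPolynomial (Fin m) k | f.totalDegree ≤ (j + t + 1) - 1} =
          (VSpace F ((j + t + 1) - 1) : Set (MvPolynomial (Fin m) k)) := by
        by_contra hne'
        exact hnotS ⟨hcpos, hne'⟩
      have hdf : f.totalDegree ≤ (j + t + 1) - 1 := by
        have : f.totalDegree ≤ j := le_max_right _ _
        omega
      have : f ∈ (VSpace F ((j + t + 1) - 1) : Set (MvPolynomial (Fin m) k)) := by
        rw [← heq]; exact ⟨h, hdf⟩
      simpa using this
  obtain ⟨t, ht⟩ : ∃ t, max (lastFallDegree F) f.totalDegree = j + t :=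
    ⟨max (lastFallDegree F) f.totalDegree - j, by omega⟩
  exact descend t (ht ▸ hstart)
end

section
/- Let q be a prime power, n ≥ 1, k a finite field of cardinality q^n, and F ⊆ k[X_0,...,X_{m-1}] a finite set. There is a bijection between the common zeros in k^m of F ∪ {X_i^{q^n} − X_i} and the common zeros in (k')^{mn} of the Weil descent system F' ∪ {X_{ij}^q − X_{ij}}, where k' is the subfield of cardinality q, given by writing X_i = sum_j α_j X_{ij} for a fixed basis α_0,...,α_{n-1} of k over k'. -/
open MvPolynomial

theorem weil_descent_aux {q n m : ℕ}
    {k' k : Type*} [Field k'] [Field k] [Fintype k'] [Fintype k] [Algebra k' k]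
    (hcard' : Fintype.card k' = q)
    (b : Module.Basis (Fin n) k' k)
    (f : MvPolynomial (Fin m) k)
    (Fdf : Fin n → MvPolynomial (Fin m × Fin n) k')
    (hFd :
      MvPolynomial.aeval
          (fun i : Fin m => ∑ j : Fin n, MvPolynomial.C (b j) * MvPolynomial.X (i, j)) f
        - ∑ j : Fin n, MvPolynomial.C (b j) *
            MvPolynomial.map (algebraMap k' k) (Fdf j)
      ∈ Ideal.span {g : MvPolynomial (Fin m × Fin n) k |
          ∃ p : Fin m × Fin n, g = MvPolynomial.X p ^ q - MvPolynomial.X p})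
    (y : Fin m × Fin n → k') :
    MvPolynomial.eval (fun i : Fin m => ∑ j : Fin n, y (i, j) • b j) f
      = ∑ j : Fin n, MvPolynomial.eval y (Fdf j) • b j := by
  have hfe : ∀ a : k', a ^ q = a := by
    intro a; rw [← hcard']; exact FiniteField.pow_card a
  set yk : Fin m × Fin n → k := fun p => algebraMap k' k (y p) with hyk
  set φ : MvPolynomial (Fin m × Fin n) k →+* k := (MvPolynomial.eval yk : _ →+* k) with hφ
  have hker : Ideal.span {g : MvPolynomial (Fin m × Fin n) k |
      ∃ p : Fin m × Fin n, g = MvPolynomial.X p ^ q - MvPolynomial.X p} ≤ RingHom.ker φ := by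
    rw [Ideal.span_le]
    rintro g ⟨p, rfl⟩
    simp only [SetLike.mem_coe, RingHom.mem_ker, hφ, map_sub, map_pow, eval_X, hyk]
    rw [← map_pow, hfe, sub_self]
  have h0 : φ (MvPolynomial.aeval
        (fun i : Fin m => ∑ j : Fin n, MvPolynomial.C (b j) * MvPolynomial.X (i, j)) f
      - ∑ j : Fin n, MvPolynomial.C (b j) *
          MvPolynomial.map (algebraMap k' k) (Fdf j)) = 0 := hker hFd
  rw [map_sub, sub_eq_zero] at h0
  -- compute LHS of h0
  have hL : φ (MvPolynomial.aeval
        (fun i : Fin m => ∑ j : Fin n, MvPolynomial.C (b j) * MvPolynomial.X (i, j)) f)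
      = MvPolynomial.eval (fun i : Fin m => ∑ j : Fin n, y (i, j) • b j) f := by
    rw [hφ]
    show MvPolynomial.eval yk _ = _
    rw [MvPolynomial.aeval_def]
    have : algebraMap k (MvPolynomial (Fin m × Fin n) k) = MvPolynomial.C := rfl
    rw [this, ← MvPolynomial.eval_assoc]
    have hpt : (⇑(MvPolynomial.eval yk) ∘
          fun i : Fin m => ∑ j : Fin n, MvPolynomial.C (b j) * MvPolynomial.X (i, j))
        = fun i : Fin m => ∑ j : Fin n, y (i, j) • b j := by
      funext i
      simp only [Function.comp_apply, map_sum, map_mul, eval_C, eval_X, hyk]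
      exact Finset.sum_congr rfl fun j _ => by rw [Algebra.smul_def, mul_comm]
    rw [hpt]
  -- compute RHS of h0
  have hR : φ (∑ j : Fin n, MvPolynomial.C (b j) *
        MvPolynomial.map (algebraMap k' k) (Fdf j))
      = ∑ j : Fin n, MvPolynomial.eval y (Fdf j) • b j := by
    rw [map_sum]
    refine Finset.sum_congr rfl fun j _ => ?_
    rw [hφ, map_mul]
    show MvPolynomial.eval yk _ * MvPolynomial.eval yk _ = _
    rw [eval_C, MvPolynomial.eval_map]
    have : MvPolynomial.eval₂ (algebraMap k' k) yk (Fdf j)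
        = algebraMap k' k (MvPolynomial.eval y (Fdf j)) := by
      have := MvPolynomial.eval₂_comp_left (algebraMap k' k) (RingHom.id k') y (Fdf j)
      simp only [MvPolynomial.eval₂_id, RingHomCompTriple.comp_eq] at this
      exact this.symm
    rw [this, Algebra.smul_def, mul_comm]
  rw [← hL, ← hR, h0]

/-- Let `k'` be a finite field of cardinality `q`, `k` an extension of
cardinality `q^n` with basis `b : Fin n → k` over `k'`, and `F` a finite set of
polynomials in `k[X_0,...,X_{m-1}]`. Let `Fd f j` (`j = 0,...,n-1`) be the Weil descent
components of `f`, characterized by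
`f(∑_j b_j X_{0j}, ..., ∑_j b_j X_{m-1,j}) ≡ ∑_j b_j [f]_j mod (X_{ij}^q - X_{ij})`
with `deg_{X_{ij}}([f]_j) ≤ q - 1`. Then `y ↦ (∑_j y_{ij} b_j)_i` is a bijection from
the common zeros in `(k')^{mn}` of `F' ∪ {X_{ij}^q - X_{ij}}` to the common zeros in
`k^m` of `F ∪ {X_i^{q^n} - X_i}`. -/
theorem weil_descent_zero_bijection {q n m : ℕ} (hq : 1 < q) (hn : 0 < n)
    {k' k : Type*} [Field k'] [Field k] [Fintype k'] [Fintype k] [Algebra k' k]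
    (hcard' : Fintype.card k' = q) (hcard : Fintype.card k = q ^ n)
    (b : Module.Basis (Fin n) k' k)
    (F : Finset (MvPolynomial (Fin m) k))
    (Fd : MvPolynomial (Fin m) k → Fin n → MvPolynomial (Fin m × Fin n) k')
    (hFdeg : ∀ f ∈ F, ∀ j : Fin n, ∀ p : Fin m × Fin n, (Fd f j).degreeOf p ≤ q - 1)
    (hFd : ∀ f ∈ F,
      MvPolynomial.aeval
          (fun i : Fin m => ∑ j : Fin n, MvPolynomial.C (b j) * MvPolynomial.X (i, j)) f
        - ∑ j : Fin n, MvPolynomial.C (b j) *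
            MvPolynomial.map (algebraMap k' k) (Fd f j)
      ∈ Ideal.span {g : MvPolynomial (Fin m × Fin n) k |
          ∃ p : Fin m × Fin n, g = MvPolynomial.X p ^ q - MvPolynomial.X p}) :
    Set.BijOn (fun y : Fin m × Fin n → k' => fun i : Fin m => ∑ j : Fin n, y (i, j) • b j)
      {y : Fin m × Fin n → k' |
        (∀ f ∈ F, ∀ j : Fin n, MvPolynomial.eval y (Fd f j) = 0) ∧
        ∀ p : Fin m × Fin n, y p ^ q - y p = 0}
      {x : Fin m → k |
        (∀ f ∈ F, MvPolynomial.eval x f = 0) ∧ ∀ i : Fin m, x i ^ q ^ n - x i = 0} := by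
  have hfe' : ∀ a : k', a ^ q = a := by
    intro a; rw [← hcard']; exact FiniteField.pow_card a
  have hfe : ∀ a : k, a ^ q ^ n = a := by
    intro a; rw [← hcard]; exact FiniteField.pow_card a
  have hsum : ∀ c : Fin n → k', ∑ j : Fin n, c j • b j = b.equivFun.symm c := by
    intro c; rw [b.equivFun_symm_apply]
  have hzero : ∀ c : Fin n → k', (∑ j : Fin n, c j • b j) = 0 → ∀ j, c j = 0 := by
    intro c hc j
    have : b.equivFun.symm c = b.equivFun.symm 0 := by
      rw [← hsum, hc, map_zero]
    have := b.equivFun.symm.injective this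
    rw [this]; rfl
  refine ⟨?_, ?_, ?_⟩
  · rintro y ⟨h1, _⟩
    refine ⟨fun f hf => ?_, fun i => by rw [hfe, sub_self]⟩
    rw [weil_descent_aux hcard' b f (Fd f) (hFd f hf) y]
    simp only [h1 f hf, zero_smul, Finset.sum_const_zero]
  · rintro y _ y' _ h
    funext p
    have h1 : ∀ i : Fin m, (∑ j : Fin n, y (i, j) • b j) = ∑ j : Fin n, y' (i, j) • b j :=
      fun i => congrFun h i
    have h2 := h1 p.1
    rw [hsum, hsum] at h2
    have := b.equivFun.symm.injective h2
    have := congrFun this p.2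
    simpa using this
  · rintro x ⟨h1, _⟩
    refine ⟨fun p => b.equivFun (x p.1) p.2, ⟨fun f hf j => ?_, fun p => by
      rw [hfe', sub_self]⟩, ?_⟩
    · have hx : ∀ i : Fin m,
          (∑ j : Fin n, b.equivFun (x i) j • b j) = x i := by
        intro i; rw [hsum]; exact b.equivFun.symm_apply_apply (x i)
      have := weil_descent_aux hcard' b f (Fd f) (hFd f hf)
        (fun p => b.equivFun (x p.1) p.2)
      simp only at this
      rw [funext hx, h1 f hf] at this
      exact hzero _ this.symm j
    · funext i
      show (∑ j : Fin n, b.equivFun (x i) j • b j) = x i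
      rw [hsum]
      exact b.equivFun.symm_apply_apply (x i)
end
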